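/- Let X ⊆ ℝ^n be a closed set. Then every extreme point of closure(conv X) belongs to X. -/

import Mathlib

open Set Metric

variable {E : Type*} [NormedAddCommGroup E] [NormedSpace ℝ E]

/-- A convex join of two compact sets is compact. -/
lemma aux_isCompact_convexJoin {s t : Set E} (hs : IsCompact s) (ht : IsCompact t) :
    IsCompact (convexJoin ℝ s t) := by
  have heq : convexJoin ℝ s t =
      (fun z : (E × E) × ℝ => (1 - z.2) • z.1.1 + z.2 • z.1.2) ''
        ((s ×ˢ t) ×ˢ Icc (0 : ℝ) 1) := by
    ext y
    constructor
    · intro hy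
      obtain ⟨a, has, b, hbt, hseg⟩ := mem_convexJoin.1 hy
      rw [segment_eq_image] at hseg
      obtain ⟨θ, hθ, hy'⟩ := hseg
      exact ⟨((a, b), θ), ⟨⟨has, hbt⟩, hθ⟩, hy'⟩
    · rintro ⟨⟨⟨a, b⟩, θ⟩, ⟨⟨has, hbt⟩, hθ⟩, rfl⟩
      refine mem_convexJoin.2 ⟨a, has, b, hbt, ?_⟩
      rw [segment_eq_image]
      exact ⟨θ, hθ, rfl⟩
  rw [heq]
  exact (((hs.prod ht).prod isCompact_Icc).image (by fun_prop))

lemma aux_isCompact_convexHull_union {s t : Set E}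
    (hs : IsCompact (convexHull ℝ s)) (ht : IsCompact (convexHull ℝ t)) :
    IsCompact (convexHull ℝ (s ∪ t)) := by
  rcases s.eq_empty_or_nonempty with rfl | hs'
  · simpa using ht
  rcases t.eq_empty_or_nonempty with rfl | ht'
  · simpa using hs
  rw [convexHull_union hs' ht']
  exact aux_isCompact_convexJoin hs ht

/-- Milman-type theorem for compact sets in a finite dimensional space. -/
lemma aux_milman [FiniteDimensional ℝ E] (s : Set E) (hs : IsCompact s) :
    Set.extremePoints ℝ (closure (convexHull ℝ s)) ⊆ s := by
  intro x hx
  have hxK : x ∈ closure (convexHull ℝ s) := hx.1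
  have hsclosed : closure s = s := hs.isClosed.closure_eq
  rw [← hsclosed]
  rw [Metric.mem_closure_iff]
  intro ε hε
  set δ : ℝ := ε / 3 with hδdef
  have hδ : 0 < δ := by positivity
  -- cover s by finitely many balls of radius δ centered at points of E
  obtain ⟨t, hcover⟩ := hs.elim_finite_subcover (fun c : E => ball c δ)
    (fun c => isOpen_ball) (fun y hy => mem_iUnion.2 ⟨y, mem_ball_self hδ⟩)
  set C : E → Set E := fun c => closure (convexHull ℝ (s ∩ closedBall c δ)) with hCdef
  have hCsub : ∀ c, C c ⊆ closedBall c δ := fun c =>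
    closure_minimal (convexHull_min inter_subset_right (convex_closedBall c δ))
      Metric.isClosed_closedBall
  have hCcomp : ∀ c, IsCompact (C c) := fun c =>
    (isCompact_closedBall c δ).of_isClosed_subset isClosed_closure (hCsub c)
  have hCconv : ∀ c, Convex ℝ (C c) := fun c => (convex_convexHull ℝ _).closure
  -- the convex hull of the union of the C c is compact
  have hJcomp : ∀ (u : Finset E), IsCompact (convexHull ℝ (⋃ c ∈ u, C c)) := by
    intro u
    classical
    induction u using Finset.induction_on with
    | empty => simp
    | @insert c u' hc ih =>
      have : (⋃ c' ∈ insert c u', C c') = C c ∪ ⋃ c' ∈ u', C c' := by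
        simp [Set.biUnion_insert]
      rw [this]
      refine aux_isCompact_convexHull_union ?_ ih
      rw [(hCconv c).convexHull_eq]
      exact hCcomp c
  set J := convexHull ℝ (⋃ c ∈ t, C c) with hJdef
  have hJK : J ⊆ closure (convexHull ℝ s) := by
    apply convexHull_min
    · intro y hy
      obtain ⟨c, _, hyc⟩ := mem_iUnion₂.1 hy
      exact closure_mono (convexHull_mono inter_subset_left) hyc
    · exact (convex_convexHull ℝ s).closure
  have hKJ : closure (convexHull ℝ s) ⊆ J := by
    apply closure_minimal
    · apply convexHull_min
      · intro y hy
        have := hcover hy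
        obtain ⟨c, hct, hyc⟩ := mem_iUnion₂.1 this
        refine subset_convexHull ℝ _ (mem_iUnion₂.2 ⟨c, hct, ?_⟩)
        exact subset_closure (subset_convexHull ℝ _ ⟨hy, ball_subset_closedBall hyc⟩)
      · exact convex_convexHull ℝ _
    · exact (hJcomp t).isClosed
  have hxJ : x ∈ J := hKJ hxK
  have hxextJ : x ∈ Set.extremePoints ℝ J :=
    inter_extremePoints_subset_extremePoints_of_subset hJK ⟨hxJ, hx⟩
  have hxC := extremePoints_convexHull_subset hxextJ
  obtain ⟨c, _, hxc⟩ := mem_iUnion₂.1 hxC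
  -- C c is nonempty, so s ∩ closedBall c δ is nonempty
  have hne : (s ∩ closedBall c δ).Nonempty := by
    rw [← convexHull_nonempty_iff (𝕜 := ℝ)]
    exact closure_nonempty_iff.1 ⟨x, hxc⟩
  obtain ⟨c', hc's, hc'ball⟩ := hne
  refine ⟨c', hc's, ?_⟩
  have h1 : dist x c ≤ δ := (hCsub c) hxc
  have h2 : dist c' c ≤ δ := hc'ball
  calc dist x c' ≤ dist x c + dist c c' := dist_triangle _ _ _
    _ ≤ δ + δ := by rw [dist_comm c c']; linarith
    _ < ε := by rw [hδdef]; linarith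

/-- Key localization lemma: a point of the convex hull of `F ⊆ A ∪ Y` lying in the
closed ball belongs to the convex hull of `Y = (A ∩ ball) ∪ (hull A ∩ sphere)`. -/
lemma aux_key (A : Set E) (x : E) (r : ℝ) :
    ∀ (m : ℕ) (F : Finset E),
      (F.filter (fun z => r < dist z x)).card ≤ m →
      ↑F ⊆ A ∪ ((A ∩ Metric.closedBall x r) ∪ (convexHull ℝ A ∩ Metric.sphere x r)) →
      ∀ y ∈ convexHull ℝ (F : Set E), y ∈ Metric.closedBall x r →
      y ∈ convexHull ℝ ((A ∩ Metric.closedBall x r) ∪ (convexHull ℝ A ∩ Metric.sphere x r)) := by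
  classical
  set Y := (A ∩ Metric.closedBall x r) ∪ (convexHull ℝ A ∩ Metric.sphere x r) with hYdef
  have hYA : Y ⊆ convexHull ℝ A := by
    rintro q (⟨hq, _⟩ | ⟨hq, _⟩)
    · exact subset_convexHull ℝ A hq
    · exact hq
  -- the "all points inside the ball" case
  have inside : ∀ (F : Finset E),
      ↑F ⊆ A ∪ Y → (∀ p ∈ F, p ∈ Metric.closedBall x r) →
      ∀ y ∈ convexHull ℝ (F : Set E), y ∈ convexHull ℝ Y := by
    intro F hFsub hall y hy
    refine convexHull_mono ?_ hy
    intro q hq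
    rcases hFsub hq with hqA | hqY
    · exact Or.inl ⟨hqA, hall q hq⟩
    · exact hqY
  intro m
  induction m with
  | zero =>
    intro F hcard hFsub y hy hyB
    have hall : ∀ p ∈ F, p ∈ Metric.closedBall x r := by
      intro p hp
      by_contra hpB
      have : p ∈ F.filter (fun z => r < dist z x) :=
        Finset.mem_filter.2 ⟨hp, by rwa [mem_closedBall, not_le] at hpB⟩
      have := Finset.card_pos.2 ⟨p, this⟩
      omega
    exact inside F hFsub hall y hy
  | succ m ih =>
    intro F hcard hFsub y hy hyB
    by_cases hall : ∀ p ∈ F, p ∈ Metric.closedBall x r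
    · exact inside F hFsub hall y hy
    push_neg at hall
    obtain ⟨p, hp, hpB⟩ := hall
    set F' := F.erase p with hF'def
    have hF'card : (F'.filter (fun z => r < dist z x)).card ≤ m := by
      have h1 : F'.filter (fun z => r < dist z x) =
          (F.filter (fun z => r < dist z x)).erase p :=
        Finset.filter_erase _ _ _
      have h2 : p ∈ F.filter (fun z => r < dist z x) :=
        Finset.mem_filter.2 ⟨hp, by rwa [mem_closedBall, not_le] at hpB⟩
      rw [h1, Finset.card_erase_of_mem h2]
      omega
    have hF'sub : ↑F' ⊆ A ∪ Y := fun q hq =>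
      hFsub (Finset.mem_coe.2 (Finset.erase_subset p F (Finset.mem_coe.1 hq)))
    have hFA : (↑F : Set E) ⊆ convexHull ℝ A := by
      intro q hq
      rcases hFsub hq with hqA | hqY
      · exact subset_convexHull ℝ A hqA
      · exact hYA hqY
    have hyA : y ∈ convexHull ℝ A := convexHull_min hFA (convex_convexHull ℝ A) hy
    have hpA : p ∈ convexHull ℝ A := hFA (Finset.mem_coe.2 hp)
    -- F' is nonempty
    rcases F'.eq_empty_or_nonempty with hF'e | hF'ne
    · exfalso
      have hFp : F = {p} := by
        rw [hF'def] at hF'e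
        have := Finset.insert_erase hp
        rw [hF'e] at this
        simpa using this.symm
      rw [hFp] at hy
      simp only [Finset.coe_singleton, convexHull_singleton, Set.mem_singleton_iff] at hy
      rw [hy] at hyB
      exact hpB hyB
    have hcoeF : (↑F : Set E) = insert p ↑F' := by
      rw [hF'def, Finset.coe_erase, Set.insert_diff_singleton,
        Set.insert_eq_self.2 (Finset.mem_coe.2 hp)]
    rw [hcoeF, convexHull_insert (Finset.coe_nonempty.2 hF'ne)] at hy
    obtain ⟨p', hp', z, hz, hseg⟩ := mem_convexJoin.1 hy
    rw [Set.mem_singleton_iff] at hp'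
    rw [hp'] at hseg
    obtain ⟨a, b, ha, hb, hab, hy'⟩ := hseg
    rcases eq_or_lt_of_le ha with ha0 | ha0
    · -- a = 0 : y = z ∈ convexHull F'
      have hyz : y = z := by
        rw [← hy', ← ha0]
        have hb1 : b = 1 := by linarith
        rw [hb1]; simp
      rw [hyz]
      exact ih F' hF'card hF'sub z hz (hyz ▸ hyB)
    -- a > 0 : find the sphere crossing point
    have hb' : b = 1 - a := by linarith
    subst hb'
    have hcont : Continuous fun θ : ℝ => dist ((1 - θ) • y + θ • p) x := by fun_prop
    have hivt := intermediate_value_Icc (zero_le_one (α := ℝ)) hcont.continuousOn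
    have hr : r ∈ Icc (dist ((1 - (0:ℝ)) • y + (0:ℝ) • p) x)
        (dist ((1 - (1:ℝ)) • y + (1:ℝ) • p) x) := by
      simp only [sub_zero, one_smul, zero_smul, add_zero, sub_self, zero_add]
      constructor
      · exact mem_closedBall.1 hyB
      · exact le_of_lt (by simpa [mem_closedBall, not_le] using hpB)
    obtain ⟨θ, hθI, hθ⟩ := hivt hr
    set q : E := (1 - θ) • y + θ • p with hqdef
    have hqS : q ∈ Metric.sphere x r := hθ
    have hqA : q ∈ convexHull ℝ A :=
      (convex_convexHull ℝ A) hyA hpA (by linarith [hθI.2]) hθI.1 (by ring)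
    have hqY : q ∈ Y := Or.inr ⟨hqA, hqS⟩
    have hqB : q ∈ Metric.closedBall x r := by
      rw [mem_closedBall]
      rw [mem_sphere] at hqS
      exact le_of_eq hqS
    -- express y as a convex combination of q and z
    set D : ℝ := a + θ * (1 - a) with hDdef
    have hD : 0 < D := by
      have : 0 ≤ θ * (1 - a) := mul_nonneg hθI.1 (by linarith)
      linarith
    have hq2 : q = D • p + ((1 - θ) * (1 - a)) • z := by
      rw [hqdef, ← hy', hDdef]
      module
    have hyqz : (a / D) • q + (θ * (1 - a) / D) • z = y := by
      rw [hq2, ← hy']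
      match_scalars
      · field_simp
      · field_simp
        ring
    have hyseg : y ∈ segment ℝ q z := by
      refine ⟨a / D, θ * (1 - a) / D, ?_, ?_, ?_, hyqz⟩
      · positivity
      · have : 0 ≤ θ * (1 - a) := mul_nonneg hθI.1 (by linarith)
        positivity
      · field_simp
        exact hDdef.symm
    -- now apply the induction hypothesis to insert q F'
    have hins : y ∈ convexHull ℝ ((insert q F' : Finset E) : Set E) := by
      rw [Finset.coe_insert]
      refine (convex_convexHull ℝ _).segment_subset
        (subset_convexHull ℝ _ (Set.mem_insert q _))
        (convexHull_mono (Set.subset_insert q _) hz) hyseg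
    have hinscard : ((insert q F').filter (fun z => r < dist z x)).card ≤ m := by
      by_cases hqF' : q ∈ F'
      · rw [Finset.insert_eq_self.2 hqF']
        exact hF'card
      · rw [Finset.filter_insert, if_neg (not_lt.2 (mem_closedBall.1 hqB))]
        exact hF'card
    have hinssub : ↑(insert q F') ⊆ A ∪ Y := by
      rw [Finset.coe_insert]
      exact Set.insert_subset (Or.inr hqY) hF'sub
    exact ih (insert q F') hinscard hinssub y hins hyB

theorem extremePoints_closed_convexHull_subset {n : ℕ}
    (X : Set (Fin n → ℝ)) (hX : IsClosed X) :
    Set.extremePoints ℝ (closure (convexHull ℝ X)) ⊆ X := by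
  intro x hx
  have hxK : x ∈ closure (convexHull ℝ X) := hx.1
  set K := closure (convexHull ℝ X) with hKdef
  set Y : Set (Fin n → ℝ) :=
    (X ∩ Metric.closedBall x 1) ∪ (convexHull ℝ X ∩ Metric.sphere x 1) with hYdef
  set Y' : Set (Fin n → ℝ) :=
    (X ∩ Metric.closedBall x 1) ∪ (K ∩ Metric.sphere x 1) with hY'def
  have hYY' : Y ⊆ Y' :=
    Set.union_subset_union_right _ (Set.inter_subset_inter_left _ subset_closure)
  -- x is in the closure of (convexHull X ∩ closedBall x 1)
  have hx' : x ∈ closure (convexHull ℝ X ∩ Metric.closedBall x 1) := by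
    rw [mem_closure_iff_nhds]
    intro U hU
    obtain ⟨y, hy⟩ := mem_closure_iff_nhds.1 hxK (U ∩ Metric.closedBall x 1)
      (Filter.inter_mem hU (Metric.closedBall_mem_nhds x one_pos))
    exact ⟨y, hy.1.1, hy.2, hy.1.2⟩
  -- convexHull X ∩ closedBall ⊆ convexHull Y'
  have hmain : convexHull ℝ X ∩ Metric.closedBall x 1 ⊆ convexHull ℝ Y' := by
    rintro y ⟨hy, hyB⟩
    obtain ⟨F, hFX, hyF⟩ : ∃ F : Finset (Fin n → ℝ),
        ↑F ⊆ X ∧ y ∈ convexHull ℝ (F : Set (Fin n → ℝ)) := by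
      rw [convexHull_eq_union_convexHull_finite_subsets] at hy
      obtain ⟨F, hF⟩ := mem_iUnion.1 hy
      obtain ⟨hFX, hyF⟩ := mem_iUnion.1 hF
      exact ⟨F, hFX, hyF⟩
    have := aux_key X x 1 (F.filter (fun z => (1:ℝ) < dist z x)).card F
      le_rfl (fun p hp => Or.inl (hFX hp)) y hyF hyB
    exact convexHull_mono hYY' this
  have hxK' : x ∈ closure (convexHull ℝ Y') :=
    closure_mono hmain hx'
  -- Y' is compact
  have hY'comp : IsCompact Y' :=
    ((isCompact_closedBall x 1).inter_left hX).union
      ((isCompact_sphere x 1).inter_left isClosed_closure)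
  -- closure (convexHull Y') ⊆ K
  have hsubK : closure (convexHull ℝ Y') ⊆ K := by
    apply closure_minimal
    · apply convexHull_min
      · rintro y (⟨hy, _⟩ | ⟨hy, _⟩)
        · exact subset_closure (subset_convexHull ℝ X hy)
        · exact hy
      · exact (convex_convexHull ℝ X).closure
    · exact isClosed_closure
  have hxext : x ∈ Set.extremePoints ℝ (closure (convexHull ℝ Y')) :=
    inter_extremePoints_subset_extremePoints_of_subset hsubK ⟨hxK', hx⟩
  have hxY' : x ∈ Y' := aux_milman Y' hY'comp hxext
  rcases hxY' with ⟨hxX, _⟩ | ⟨_, hxS⟩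
  · exact hxX
  · exfalso
    rw [mem_sphere, dist_self] at hxS
    norm_num at hxS
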